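/- Let (Ω, 𝒜, P) be a probability space, X, Y : Ω → ℝ random variables with Y integrable, and ψ : ℝ → ℝ convex and strictly convex at 0 with ψ(0) = 0 such that ψ(2Y) and ψ(−2Y) are integrable. Then ∫_{ℝ×ℝ} ψ(E[Y|X = x₁] − E[Y|X = x₂]) d(P^X ⊗ P^X)(x₁,x₂) = 0 if and only if E[Y|X = x] = E[Y] for P^X-almost every x (equivalently, the conditional expectation E[Y|X] equals E[Y] almost surely). -/

import Mathlib

open MeasureTheory ProbabilityTheory Filter Set
open scoped ENNReal Topology

/-- For ψ convex, strictly convex at 0, with ψ(0)=0, the sensitivity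
functional of conditional expectations vanishes iff E[Y|X=x] = E[Y] for
P^X-almost every x. -/
theorem stmt2 {Ω : Type*} [MeasurableSpace Ω] (P : Measure Ω) [IsProbabilityMeasure P]
    (X Y : Ω → ℝ) (hX : Measurable X) (hY : Measurable Y)
    (hYint : Integrable Y P)
    (κ : Kernel ℝ ℝ) [IsMarkovKernel κ]
    (hκ : ∀ A B : Set ℝ, MeasurableSet A → MeasurableSet B →
      P.map (fun ω => (X ω, Y ω)) (A ×ˢ B) = ∫⁻ x in A, κ x B ∂(P.map X))
    (ψ : ℝ → ℝ) (hψ : ConvexOn ℝ Set.univ ψ) (hψ0 : ψ 0 = 0)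
    (hψstrict : ∀ ε : ℝ, 0 < ε → ψ 0 < (ψ (-ε) + ψ ε) / 2)
    (hint1 : Integrable (fun ω => ψ (2 * Y ω)) P)
    (hint2 : Integrable (fun ω => ψ (-2 * Y ω)) P) :
    ∫ x : ℝ × ℝ, ψ ((∫ y, y ∂(κ x.1)) - ∫ y, y ∂(κ x.2))
        ∂((P.map X).prod (P.map X)) = 0 ↔
      ∀ᵐ x ∂(P.map X), (∫ y, y ∂(κ x)) = ∫ ω, Y ω ∂P := by
  set μ := P.map X with hμdef
  haveI : IsProbabilityMeasure μ := Measure.isProbabilityMeasure_map hX.aemeasurable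
  set f : ℝ → ℝ := fun x => ∫ y, y ∂κ x with hfdef
  -- continuity of ψ
  have hψc : Continuous ψ := by
    rw [← continuousOn_univ]
    exact hψ.continuousOn isOpen_univ
  -- measurability of f and the auxiliary integral functions
  have hf_sm : StronglyMeasurable f := by
    have h : StronglyMeasurable (Function.uncurry fun (_ : ℝ) (y : ℝ) => y) :=
      (measurable_snd (α := ℝ) (β := ℝ)).stronglyMeasurable
    exact h.integral_kernel_prod_right (κ := κ)
  have hf_m : Measurable f := hf_sm.measurable
  set gp : ℝ → ℝ := fun x => ∫ y, ψ (2 * y) ∂κ x with hgpdef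
  set gm : ℝ → ℝ := fun x => ∫ y, ψ (-2 * y) ∂κ x with hgmdef
  have hgp_sm : StronglyMeasurable gp := by
    have h : StronglyMeasurable (Function.uncurry fun (_ : ℝ) (y : ℝ) => ψ (2 * y)) :=
      (hψc.comp (continuous_const.mul continuous_snd)).stronglyMeasurable
    exact h.integral_kernel_prod_right (κ := κ)
  have hgm_sm : StronglyMeasurable gm := by
    have h : StronglyMeasurable (Function.uncurry fun (_ : ℝ) (y : ℝ) => ψ (-2 * y)) :=
      (hψc.comp (continuous_const.mul continuous_snd)).stronglyMeasurable
    exact h.integral_kernel_prod_right (κ := κ)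
  -- the joint law is μ ⊗ₘ κ
  have hmap : Measurable (fun ω => (X ω, Y ω)) := hX.prodMk hY
  haveI : IsProbabilityMeasure (P.map (fun ω => (X ω, Y ω))) :=
    Measure.isProbabilityMeasure_map hmap.aemeasurable
  have hlaw : P.map (fun ω => (X ω, Y ω)) = μ.compProd κ := by
    refine ext_of_generate_finite _ generateFrom_prod.symm isPiSystem_prod ?_ ?_
    · rintro s ⟨A, hA, B, hB, rfl⟩
      simp only [Set.mem_setOf_eq] at hA hB
      rw [hκ A B hA hB, Measure.compProd_apply_prod hA hB]
    · simp
  -- transfer of integrability and integrals from P to μ ⊗ₘ κ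
  have key : ∀ g : ℝ → ℝ, Measurable g → Integrable (fun ω => g (Y ω)) P →
      Integrable (fun p : ℝ × ℝ => g p.2) (μ ⊗ₘ κ) ∧
        ∫ p : ℝ × ℝ, g p.2 ∂(μ ⊗ₘ κ) = ∫ ω, g (Y ω) ∂P := by
    intro g hg hgint
    have hsm : AEStronglyMeasurable (fun p : ℝ × ℝ => g p.2)
        (P.map (fun ω => (X ω, Y ω))) :=
      (hg.comp measurable_snd).aestronglyMeasurable
    have h1 : Integrable (fun p : ℝ × ℝ => g p.2) (P.map (fun ω => (X ω, Y ω))) := by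
      rw [integrable_map_measure hsm hmap.aemeasurable]
      exact hgint
    refine ⟨by rwa [hlaw] at h1, ?_⟩
    rw [← hlaw, integral_map hmap.aemeasurable hsm]
  obtain ⟨hid_cp, hid_eq⟩ := key (fun t => t) measurable_id hYint
  obtain ⟨hp_cp, -⟩ := key (fun t => ψ (2 * t))
    (hψc.comp (continuous_const.mul continuous_id)).measurable hint1
  obtain ⟨hm_cp, -⟩ := key (fun t => ψ (-2 * t))
    (hψc.comp (continuous_const.mul continuous_id)).measurable hint2
  -- a.e. integrability w.r.t. the kernel, and integrable majorants
  have hid_iff := (Measure.integrable_compProd_iff (μ := μ) (κ := κ)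
    (f := fun p : ℝ × ℝ => p.2) hid_cp.aestronglyMeasurable).mp hid_cp
  have hp_iff := (Measure.integrable_compProd_iff (μ := μ) (κ := κ)
    (f := fun p : ℝ × ℝ => ψ (2 * p.2)) hp_cp.aestronglyMeasurable).mp hp_cp
  have hm_iff := (Measure.integrable_compProd_iff (μ := μ) (κ := κ)
    (f := fun p : ℝ × ℝ => ψ (-2 * p.2)) hm_cp.aestronglyMeasurable).mp hm_cp
  have hf_int : Integrable f μ := by
    refine Integrable.mono' hid_iff.2 hf_sm.aestronglyMeasurable ?_
    exact Eventually.of_forall fun x => norm_integral_le_integral_norm _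
  have hgp_int : Integrable gp μ := by
    refine Integrable.mono' hp_iff.2 hgp_sm.aestronglyMeasurable ?_
    exact Eventually.of_forall fun x => norm_integral_le_integral_norm _
  have hgm_int : Integrable gm μ := by
    refine Integrable.mono' hm_iff.2 hgm_sm.aestronglyMeasurable ?_
    exact Eventually.of_forall fun x => norm_integral_le_integral_norm _
  -- Jensen's inequality a.e.
  have hJ : ∀ᵐ x ∂μ, ψ (2 * f x) ≤ gp x ∧ ψ (-2 * f x) ≤ gm x := by
    filter_upwards [hid_iff.1, hp_iff.1, hm_iff.1] with x h1 h2 h3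
    constructor
    · have := hψ.map_integral_le (μ := κ x) (f := fun y => (2 : ℝ) * y)
        (hψc.continuousOn) isClosed_univ
        (Eventually.of_forall fun y => mem_univ _) (h1.const_mul 2) (by exact h2)
      rwa [integral_const_mul] at this
    · have := hψ.map_integral_le (μ := κ x) (f := fun y => (-2 : ℝ) * y)
        (hψc.continuousOn) isClosed_univ
        (Eventually.of_forall fun y => mem_univ _) (h1.const_mul (-2)) (by exact h3)
      rwa [integral_const_mul] at this
  -- the basic convexity upper bound ψ (a - b) ≤ (ψ (2a) + ψ (-2b)) / 2
  have hconv : ∀ a b : ℝ, ψ (a - b) ≤ (ψ (2 * a) + ψ (-2 * b)) / 2 := by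
    intro a b
    have := hψ.2 (mem_univ (2 * a)) (mem_univ (-2 * b))
      (by norm_num : (0:ℝ) ≤ 1/2) (by norm_num : (0:ℝ) ≤ 1/2) (by norm_num)
    simp only [smul_eq_mul] at this
    have heq : (1/2 : ℝ) * (2 * a) + (1/2 : ℝ) * (-2 * b) = a - b := by ring
    rw [heq] at this
    linarith
  have hpsi_lb : ∀ t : ℝ, -ψ (-t) ≤ ψ t := by
    intro t
    have := hψ.2 (mem_univ t) (mem_univ (-t))
      (by norm_num : (0:ℝ) ≤ 1/2) (by norm_num : (0:ℝ) ≤ 1/2) (by norm_num)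
    simp only [smul_eq_mul] at this
    have heq : (1/2 : ℝ) * t + (1/2 : ℝ) * (-t) = 0 := by ring
    rw [heq, hψ0] at this
    linarith
  -- a.e. bound on the product
  have hJprod : ∀ᵐ p : ℝ × ℝ ∂(μ.prod μ),
      (ψ (2 * f p.1) ≤ gp p.1 ∧ ψ (-2 * f p.1) ≤ gm p.1) ∧
        (ψ (2 * f p.2) ≤ gp p.2 ∧ ψ (-2 * f p.2) ≤ gm p.2) := by
    rw [Measure.ae_prod_iff_ae_ae]
    · filter_upwards [hJ] with x hx
      filter_upwards [hJ] with y hy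
      exact ⟨hx, hy⟩
    · have m1 : Measurable fun p : ℝ × ℝ => ψ (2 * f p.1) :=
        hψc.measurable.comp ((measurable_const.mul hf_m).comp measurable_fst)
      have m2 : Measurable fun p : ℝ × ℝ => ψ (-2 * f p.1) :=
        hψc.measurable.comp ((measurable_const.mul hf_m).comp measurable_fst)
      have m3 : Measurable fun p : ℝ × ℝ => ψ (2 * f p.2) :=
        hψc.measurable.comp ((measurable_const.mul hf_m).comp measurable_snd)
      have m4 : Measurable fun p : ℝ × ℝ => ψ (-2 * f p.2) :=
        hψc.measurable.comp ((measurable_const.mul hf_m).comp measurable_snd)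
      exact ((measurableSet_le m1 (hgp_sm.measurable.comp measurable_fst)).inter
          (measurableSet_le m2 (hgm_sm.measurable.comp measurable_fst))).inter
        ((measurableSet_le m3 (hgp_sm.measurable.comp measurable_snd)).inter
          (measurableSet_le m4 (hgm_sm.measurable.comp measurable_snd)))
  -- measurability of the main integrand
  set Ψ : ℝ × ℝ → ℝ := fun p => ψ (f p.1 - f p.2) with hΨdef
  have hΨ_m : Measurable Ψ :=
    hψc.measurable.comp ((hf_m.comp measurable_fst).sub (hf_m.comp measurable_snd))
  -- integrable majorant on product
  have hcfst : ∀ g : ℝ → ℝ, StronglyMeasurable g → Integrable g μ →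
      Integrable (fun p : ℝ × ℝ => g p.1) (μ.prod μ) := by
    intro g hgm hgint
    have h1 : Integrable g ((μ.prod μ).map Prod.fst) := by
      rw [Measure.map_fst_prod]
      simpa using hgint
    rw [integrable_map_measure hgm.aestronglyMeasurable measurable_fst.aemeasurable] at h1
    exact h1
  have hcsnd : ∀ g : ℝ → ℝ, StronglyMeasurable g → Integrable g μ →
      Integrable (fun p : ℝ × ℝ => g p.2) (μ.prod μ) := by
    intro g hgm hgint
    have h1 : Integrable g ((μ.prod μ).map Prod.snd) := by
      rw [Measure.map_snd_prod]
      simpa using hgint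
    rw [integrable_map_measure hgm.aestronglyMeasurable measurable_snd.aemeasurable] at h1
    exact h1
  have hH_int : Integrable
      (fun p : ℝ × ℝ => (|gp p.1| + |gm p.2| + (|gp p.2| + |gm p.1|)) / 2) (μ.prod μ) := by
    apply Integrable.div_const
    exact ((hcfst _ hgp_sm hgp_int).abs.add (hcsnd _ hgm_sm hgm_int).abs).add
      ((hcsnd _ hgp_sm hgp_int).abs.add (hcfst _ hgm_sm hgm_int).abs)
  have hΨ_int : Integrable Ψ (μ.prod μ) := by
    refine Integrable.mono' hH_int hΨ_m.aestronglyMeasurable ?_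
    filter_upwards [hJprod] with p hp
    have hub : Ψ p ≤ (gp p.1 + gm p.2) / 2 := by
      refine le_trans (hconv (f p.1) (f p.2)) ?_
      have := hp.1.1
      have := hp.2.2
      linarith
    have hub2 : ψ (f p.2 - f p.1) ≤ (gp p.2 + gm p.1) / 2 := by
      refine le_trans (hconv (f p.2) (f p.1)) ?_
      have := hp.2.1
      have := hp.1.2
      linarith
    have hlb : -((gp p.2 + gm p.1) / 2) ≤ Ψ p := by
      have h1 : -ψ (-(f p.1 - f p.2)) ≤ Ψ p := hpsi_lb _
      have h2 : -(f p.1 - f p.2) = f p.2 - f p.1 := by ring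
      rw [h2] at h1
      linarith
    rw [Real.norm_eq_abs, abs_le]
    constructor
    · refine le_trans ?_ hlb
      have h1 : gp p.2 + gm p.1 ≤ |gp p.2| + |gm p.1| := by
        have := le_abs_self (gp p.2); have := le_abs_self (gm p.1); linarith
      have h2 : (0:ℝ) ≤ |gp p.1| + |gm p.2| := by positivity
      linarith
    · refine le_trans hub ?_
      have h1 : gp p.1 + gm p.2 ≤ |gp p.1| + |gm p.2| := by
        have := le_abs_self (gp p.1); have := le_abs_self (gm p.2); linarith
      have h2 : (0:ℝ) ≤ |gp p.2| + |gm p.1| := by positivity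
      linarith
  -- symmetrization
  have hswap_int : Integrable (fun p : ℝ × ℝ => ψ (f p.2 - f p.1)) (μ.prod μ) := by
    have h1 : Integrable (Ψ ∘ Prod.swap) (μ.prod μ) := by
      rw [← integrable_map_measure hΨ_m.aestronglyMeasurable measurable_swap.aemeasurable,
        Measure.prod_swap]
      exact hΨ_int
    exact h1
  have hswap_eq : ∫ p : ℝ × ℝ, ψ (f p.2 - f p.1) ∂(μ.prod μ)
      = ∫ p : ℝ × ℝ, Ψ p ∂(μ.prod μ) := by
    have h1 : ∫ p : ℝ × ℝ, Ψ p ∂(μ.prod μ)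
        = ∫ p : ℝ × ℝ, Ψ p ∂((μ.prod μ).map Prod.swap) := by
      rw [Measure.prod_swap]
    rw [h1, integral_map measurable_swap.aemeasurable hΨ_m.aestronglyMeasurable]
    rfl
  -- the even part φ
  have hφ_nonneg : ∀ t : ℝ, 0 ≤ (ψ t + ψ (-t)) / 2 := by
    intro t
    have := hpsi_lb t
    linarith
  have hφ_pos : ∀ t : ℝ, t ≠ 0 → 0 < (ψ t + ψ (-t)) / 2 := by
    intro t ht
    rcases lt_or_gt_of_ne ht with h | h
    · have := hψstrict (-t) (by linarith)
      rw [hψ0, neg_neg] at this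
      linarith
    · have := hψstrict t h
      rw [hψ0] at this
      linarith
  constructor
  · -- forward direction
    intro h0
    have hΦ_int : Integrable (fun p : ℝ × ℝ => (Ψ p + ψ (f p.2 - f p.1)) / 2) (μ.prod μ) :=
      (hΨ_int.add hswap_int).div_const 2
    have hΦ_integral : ∫ p : ℝ × ℝ, (Ψ p + ψ (f p.2 - f p.1)) / 2 ∂(μ.prod μ) = 0 := by
      rw [integral_div, integral_add hΨ_int hswap_int, hswap_eq]
      rw [hΨdef] at h0 ⊢
      simp only [hfdef] at h0 ⊢
      rw [h0]
      norm_num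
    have hΦ_nonneg : ∀ p : ℝ × ℝ, 0 ≤ (Ψ p + ψ (f p.2 - f p.1)) / 2 := by
      intro p
      have h2 : f p.2 - f p.1 = -(f p.1 - f p.2) := by ring
      rw [h2]
      exact hφ_nonneg _
    have hΦ_zero : (fun p : ℝ × ℝ => (Ψ p + ψ (f p.2 - f p.1)) / 2)
        =ᵐ[μ.prod μ] 0 :=
      (integral_eq_zero_iff_of_nonneg hΦ_nonneg hΦ_int).mp hΦ_integral
    have heqae : ∀ᵐ p : ℝ × ℝ ∂(μ.prod μ), f p.1 = f p.2 := by
      filter_upwards [hΦ_zero] with p hp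
      by_contra hne
      have ht : f p.1 - f p.2 ≠ 0 := sub_ne_zero.mpr hne
      have := hφ_pos _ ht
      have h2 : f p.2 - f p.1 = -(f p.1 - f p.2) := by ring
      simp only [Pi.zero_apply] at hp
      rw [h2] at hp
      simp only [hΨdef] at hp
      linarith
    have haeae := Measure.ae_ae_of_ae_prod heqae
    -- ∫ f dμ = ∫ Y dP
    have hf_eq : ∫ x, f x ∂μ = ∫ ω, Y ω ∂P := by
      rw [← hid_eq, Measure.integral_compProd hid_cp]
    filter_upwards [haeae] with x hx
    have hconst : f =ᵐ[μ] fun _ => f x := by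
      filter_upwards [hx] with y hy
      exact hy.symm
    have : ∫ z, f z ∂μ = f x := by
      rw [integral_congr_ae hconst]
      simp
    rw [← hf_eq, this]
  · -- backward direction
    intro hae
    set c : ℝ := ∫ ω, Y ω ∂P with hcdef
    have haeprod : ∀ᵐ p : ℝ × ℝ ∂(μ.prod μ), f p.1 = c ∧ f p.2 = c := by
      rw [Measure.ae_prod_iff_ae_ae]
      · filter_upwards [hae] with x hx
        filter_upwards [hae] with y hy
        exact ⟨hx, hy⟩
      · exact ((hf_sm.comp_measurable measurable_fst).measurableSet_eq_fun
            stronglyMeasurable_const).inter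
          ((hf_sm.comp_measurable measurable_snd).measurableSet_eq_fun stronglyMeasurable_const)
    have : ∀ᵐ p : ℝ × ℝ ∂(μ.prod μ), Ψ p = 0 := by
      filter_upwards [haeprod] with p hp
      simp only [hΨdef, hp.1, hp.2, sub_self, hψ0]
    calc ∫ p : ℝ × ℝ, ψ (f p.1 - f p.2) ∂(μ.prod μ)
        = ∫ _p : ℝ × ℝ, (0:ℝ) ∂(μ.prod μ) := integral_congr_ae this
      _ = 0 := integral_zero _ _
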